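/- arXiv:2011.01751 — 2 statements merged into one kernel-verified Lean document; each statement's English description precedes it below -/
import Mathlib

section
/- Let b < x be reals. Then ∫_b^x ln(x - u) du = (x-b)ln(x-b) - (x-b), and more generally n² ∫_x^{x+1/n} ∫_b^y ln(y-u) du dy = n( (x-b)ln(x-b) - (x-b) ) + (1/2)ln(x-b) + 1/(6n(x-b)) + O(1/n²) as n → ∞ with x - b bounded away from 0. -/
open intervalIntegral MeasureTheory

lemma aux_log_integrable (c : ℝ) (hc : 0 < c) :
    IntervalIntegrable Real.log volume 0 c := by
  have hg : IntervalIntegrable (fun x : ℝ => 2 * x ^ (-(1:ℝ)/2) + 2 * x ^ ((1:ℝ)/2))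
      volume 0 c :=
    ((intervalIntegral.intervalIntegrable_rpow' (by norm_num)).const_mul 2).add
      ((intervalIntegral.intervalIntegrable_rpow' (by norm_num)).const_mul 2)
  refine hg.mono_fun' Real.measurable_log.aestronglyMeasurable ?_
  have huIoc : Set.uIoc (0:ℝ) c = Set.Ioc 0 c := Set.uIoc_of_le hc.le
  rw [huIoc]
  filter_upwards [ae_restrict_mem measurableSet_Ioc] with x hx
  have hx0 : 0 < x := hx.1
  simp only [Real.norm_eq_abs]
  rcases le_total 1 x with h1 | h1
  · have hlog : 0 ≤ Real.log x := Real.log_nonneg h1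
    rw [abs_of_nonneg hlog]
    have h2 : Real.log x = 2 * Real.log (x ^ ((1:ℝ)/2)) := by
      rw [Real.log_rpow hx0]; ring
    have h3 : Real.log (x ^ ((1:ℝ)/2)) ≤ x ^ ((1:ℝ)/2) - 1 :=
      Real.log_le_sub_one_of_pos (Real.rpow_pos_of_pos hx0 _)
    have h4 : (0:ℝ) ≤ x ^ (-(1:ℝ)/2) := (Real.rpow_pos_of_pos hx0 _).le
    nlinarith
  · have hlog : Real.log x ≤ 0 := Real.log_nonpos hx0.le h1
    rw [abs_of_nonpos hlog]
    have h2 : -Real.log x = 2 * Real.log (x ^ (-(1:ℝ)/2)) := by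
      rw [Real.log_rpow hx0]; ring
    have h3 : Real.log (x ^ (-(1:ℝ)/2)) ≤ x ^ (-(1:ℝ)/2) - 1 :=
      Real.log_le_sub_one_of_pos (Real.rpow_pos_of_pos hx0 _)
    have h4 : (0:ℝ) ≤ x ^ ((1:ℝ)/2) := (Real.rpow_pos_of_pos hx0 _).le
    nlinarith

lemma aux_integral_log (c : ℝ) (hc : 0 < c) :
    ∫ u in (0:ℝ)..c, Real.log u = c * Real.log c - c := by
  have hcont : ContinuousOn (fun s : ℝ => s * Real.log s - s) (Set.Icc 0 c) :=
    (Real.continuous_mul_log.sub continuous_id).continuousOn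
  have hderiv : ∀ s ∈ Set.Ioo (0:ℝ) c,
      HasDerivWithinAt (fun s : ℝ => s * Real.log s - s) (Real.log s) (Set.Ioi s) s := by
    intro s hs
    have h1 : HasDerivAt (fun s : ℝ => s * Real.log s - s) (Real.log s + 1 - 1) s :=
      (Real.hasDerivAt_mul_log hs.1.ne').sub (hasDerivAt_id s)
    simpa using h1.hasDerivWithinAt
  have h := integral_eq_sub_of_hasDeriv_right_of_le hc.le hcont hderiv
    (aux_log_integrable c hc)
  simpa using h

lemma aux_part1 (b x : ℝ) (h : b < x) :
    (∫ u in b..x, Real.log (x - u)) = (x - b) * Real.log (x - b) - (x - b) := by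
  rw [intervalIntegral.integral_comp_sub_left Real.log x, sub_self,
    aux_integral_log _ (by linarith)]

lemma aux_log_taylor_mono (f f' : ℝ → ℝ)
    (hder : ∀ v : ℝ, 0 < v → HasDerivAt f (f' v) v)
    (hcont : ContinuousOn f (Set.Ici 0))
    (hpos : ∀ v : ℝ, 0 < v → 0 ≤ f' v)
    (u : ℝ) (hu : 0 ≤ u) : f 0 ≤ f u := by
  have hmono : MonotoneOn f (Set.Ici 0) := by
    apply monotoneOn_of_deriv_nonneg (convex_Ici 0) hcont
    · intro v hv
      rw [interior_Ici] at hv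
      exact (hder v hv).differentiableAt.differentiableWithinAt
    · intro v hv
      rw [interior_Ici] at hv
      rw [(hder v hv).deriv]
      exact hpos v hv
  exact hmono Set.self_mem_Ici hu hu

lemma aux_hder_log (v : ℝ) (hv : 0 < v) :
    HasDerivAt (fun w : ℝ => Real.log (1 + w)) (1 / (1 + v)) v := by
  have h1 : HasDerivAt (fun w : ℝ => 1 + w) 1 v := (hasDerivAt_id v).const_add 1
  have := h1.log (by positivity)
  simpa using this

lemma aux_cont_log : ContinuousOn (fun w : ℝ => Real.log (1 + w)) (Set.Ici 0) := by
  apply ContinuousOn.log (by fun_prop)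
  intro v hv
  have : (0:ℝ) ≤ v := hv
  positivity

lemma aux_log_taylor (u : ℝ) (hu : 0 ≤ u) :
    |Real.log (1 + u) - (u - u ^ 2 / 2 + u ^ 3 / 3)| ≤ u ^ 4 / 4 := by
  have hlow : Real.log (1 + u) ≤ u - u ^ 2 / 2 + u ^ 3 / 3 := by
    have := aux_log_taylor_mono
      (fun v => v - v ^ 2 / 2 + v ^ 3 / 3 - Real.log (1 + v))
      (fun v => 1 - v + v ^ 2 - 1 / (1 + v))
      (fun v hv => by
        have h3 : HasDerivAt (fun w : ℝ => w - w ^ 2 / 2 + w ^ 3 / 3)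
            (1 - (2 : ℕ) * v ^ 1 / 2 + (3 : ℕ) * v ^ 2 / 3) v :=
          ((hasDerivAt_id v).sub ((hasDerivAt_pow 2 v).div_const 2)).add
            ((hasDerivAt_pow 3 v).div_const 3)
        have := h3.sub (aux_hder_log v hv)
        refine this.congr_deriv ?_
        push_cast; ring)
      (ContinuousOn.sub (by fun_prop) aux_cont_log)
      (fun v hv => by
        have h5 : 1 / (1 + v) ≤ 1 - v + v ^ 2 := by
          rw [div_le_iff₀ (by positivity)]
          nlinarith [pow_pos hv 3]
        linarith)
      u hu
    simp only [Real.log_one, add_zero] at this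
    norm_num at this
    linarith
  have hup : u - u ^ 2 / 2 + u ^ 3 / 3 - u ^ 4 / 4 ≤ Real.log (1 + u) := by
    have := aux_log_taylor_mono
      (fun v => Real.log (1 + v) - (v - v ^ 2 / 2 + v ^ 3 / 3 - v ^ 4 / 4))
      (fun v => 1 / (1 + v) - (1 - v + v ^ 2 - v ^ 3))
      (fun v hv => by
        have h3 : HasDerivAt (fun w : ℝ => w - w ^ 2 / 2 + w ^ 3 / 3 - w ^ 4 / 4)
            (1 - (2 : ℕ) * v ^ 1 / 2 + (3 : ℕ) * v ^ 2 / 3 - (4 : ℕ) * v ^ 3 / 4) v :=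
          (((hasDerivAt_id v).sub ((hasDerivAt_pow 2 v).div_const 2)).add
            ((hasDerivAt_pow 3 v).div_const 3)).sub ((hasDerivAt_pow 4 v).div_const 4)
        have := (aux_hder_log v hv).sub h3
        refine this.congr_deriv ?_
        push_cast; ring)
      (ContinuousOn.sub aux_cont_log (by fun_prop))
      (fun v hv => by
        have h5 : 1 - v + v ^ 2 - v ^ 3 ≤ 1 / (1 + v) := by
          rw [le_div_iff₀ (by positivity)]
          nlinarith [pow_pos hv 4]
        linarith)
      u hu
    simp only [Real.log_one, add_zero] at this
    norm_num at this
    linarith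
  rw [abs_le]
  constructor <;> linarith

lemma aux_outer (b x h : ℝ) (hbx : b < x) (hh : 0 ≤ h) :
    (∫ y in x..(x + h), ((y - b) * Real.log (y - b) - (y - b)))
      = ((x + h - b) ^ 2 * Real.log (x + h - b) / 2 - 3 * (x + h - b) ^ 2 / 4)
        - ((x - b) ^ 2 * Real.log (x - b) / 2 - 3 * (x - b) ^ 2 / 4) := by
  have hint : IntervalIntegrable (fun y : ℝ => (y - b) * Real.log (y - b) - (y - b))
      volume x (x + h) :=
    ((Real.continuous_mul_log.comp (continuous_id.sub continuous_const)).sub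
      (continuous_id.sub continuous_const)).intervalIntegrable _ _
  have hderiv : ∀ y ∈ Set.uIcc x (x + h),
      HasDerivAt (fun y : ℝ => (y - b) ^ 2 * Real.log (y - b) / 2 - 3 * (y - b) ^ 2 / 4)
        ((y - b) * Real.log (y - b) - (y - b)) y := by
    intro y hy
    rw [Set.uIcc_of_le (by linarith)] at hy
    have hyb : 0 < y - b := by
      have := hy.1
      linarith
    have h1 : HasDerivAt (fun y : ℝ => y - b) 1 y := (hasDerivAt_id y).sub_const b
    have h2 : HasDerivAt (fun y : ℝ => Real.log (y - b)) (1 / (y - b)) y := by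
      have := h1.log hyb.ne'
      simpa using this
    have h3 : HasDerivAt (fun y : ℝ => (y - b) ^ 2) ((2 : ℕ) * (y - b) ^ 1 * 1) y :=
      h1.pow 2
    have h4 := ((h3.mul h2).div_const 2).sub ((h3.const_mul 3).div_const 4)
    refine h4.congr_deriv ?_
    push_cast
    field_simp
    ring
  exact intervalIntegral.integral_eq_sub_of_hasDerivAt hderiv hint

lemma aux_identity (n t r L : ℝ) (hn : (0:ℝ) < n) (ht : 0 < t)
    (hL : L = Real.log t + ((1/n)/t - ((1/n)/t) ^ 2 / 2 + ((1/n)/t) ^ 3 / 3) + r) :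
    n ^ 2 * ((t + 1/n) ^ 2 * L / 2 - 3 * (t + 1/n) ^ 2 / 4
        - (t ^ 2 * Real.log t / 2 - 3 * t ^ 2 / 4))
      - (n * (t * Real.log t - t) + (1/2) * Real.log t + 1 / (6 * n * t))
    = n ^ 2 * ((1/n) ^ 4 / (12 * t ^ 2) + (1/n) ^ 5 / (6 * t ^ 3) + (t + 1/n) ^ 2 / 2 * r) := by
  subst hL
  field_simp
  ring

lemma aux_final (h t δ R : ℝ) (hδ : 0 < δ) (ht : δ ≤ t) (hh0 : 0 < h) (hh1 : h ≤ 1)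
    (hR0 : 0 ≤ R) (hR : R ≤ h ^ 4 / (4 * t ^ 4)) :
    (1 / h ^ 2) * (h ^ 4 / (12 * t ^ 2) + h ^ 5 / (6 * t ^ 3) + (t + h) ^ 2 / 2 * R)
      ≤ (1 / (12 * δ ^ 2) + 1 / (6 * δ ^ 3) + (1 + 1/δ) ^ 2 / (8 * δ ^ 2)) * h ^ 2 := by
  have ht0 : 0 < t := lt_of_lt_of_le hδ ht
  have hth : t + h ≤ t * (1 + 1/δ) := by
    have h1 : (1:ℝ) ≤ t / δ := (one_le_div hδ).mpr ht
    have h2 : h ≤ t / δ := hh1.trans h1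
    have h3 : t * (1 + 1/δ) = t + t/δ := by ring
    linarith
  have t1 : h ^ 4 / (12 * t ^ 2) ≤ h ^ 4 / (12 * δ ^ 2) := by gcongr
  have t2 : h ^ 5 / (6 * t ^ 3) ≤ h ^ 4 / (6 * δ ^ 3) := by
    apply div_le_div₀ (by positivity) _ (by positivity) (by gcongr)
    calc h ^ 5 = h ^ 4 * h := by ring
    _ ≤ h ^ 4 * 1 := by gcongr
    _ = h ^ 4 := by ring
  have t3 : (t + h) ^ 2 / 2 * R ≤ (1 + 1/δ) ^ 2 / (8 * δ ^ 2) * h ^ 4 := by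
    calc (t + h) ^ 2 / 2 * R ≤ (t * (1 + 1/δ)) ^ 2 / 2 * (h ^ 4 / (4 * t ^ 4)) := by
          apply mul_le_mul _ hR hR0 (by positivity)
          gcongr
    _ = (1 + 1/δ) ^ 2 / (8 * t ^ 2) * h ^ 4 := by
          field_simp
          ring
    _ ≤ (1 + 1/δ) ^ 2 / (8 * δ ^ 2) * h ^ 4 := by gcongr
  rw [one_div, inv_mul_le_iff₀ (by positivity)]
  calc h ^ 4 / (12 * t ^ 2) + h ^ 5 / (6 * t ^ 3) + (t + h) ^ 2 / 2 * R
      ≤ h ^ 4 / (12 * δ ^ 2) + h ^ 4 / (6 * δ ^ 3) + (1 + 1/δ) ^ 2 / (8 * δ ^ 2) * h ^ 4 := by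
        linarith
    _ = h ^ 2 * ((1 / (12 * δ ^ 2) + 1 / (6 * δ ^ 3) + (1 + 1/δ) ^ 2 / (8 * δ ^ 2)) * h ^ 2) := by
        ring

open intervalIntegral in
/-- `∫_b^x ln(x-u) du = (x-b)ln(x-b) - (x-b)`, and, uniformly for `x - b ≥ δ > 0`,
`n² ∫_x^{x+1/n} ∫_b^y ln(y-u) du dy
  = n((x-b)ln(x-b) - (x-b)) + (1/2)ln(x-b) + 1/(6n(x-b)) + O(1/n²)`. -/
theorem double_log_integral_expansion :
    (∀ b x : ℝ, b < x →
      (∫ u in b..x, Real.log (x - u)) = (x - b) * Real.log (x - b) - (x - b)) ∧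
    ∀ δ : ℝ, 0 < δ → ∃ C : ℝ, ∀ n : ℕ, 1 ≤ n → ∀ b x : ℝ, δ ≤ x - b →
      |(n : ℝ) ^ 2 *
          (∫ y in x..(x + 1 / (n : ℝ)), ∫ u in b..y, Real.log (y - u)) -
        ((n : ℝ) * ((x - b) * Real.log (x - b) - (x - b)) +
          (1 / 2) * Real.log (x - b) + 1 / (6 * n * (x - b)))| ≤ C / (n : ℝ) ^ 2 := by
  constructor
  · exact aux_part1
  intro δ hδ
  refine ⟨1 / (12 * δ ^ 2) + 1 / (6 * δ ^ 3) + (1 + 1/δ) ^ 2 / (8 * δ ^ 2), ?_⟩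
  intro n hn b x ht
  have hn1 : (1:ℝ) ≤ (n:ℝ) := by exact_mod_cast hn
  have hn0 : (0:ℝ) < (n:ℝ) := by linarith
  have ht0 : 0 < x - b := lt_of_lt_of_le hδ ht
  have hbx : b < x := by linarith
  have hh0 : (0:ℝ) < 1 / (n:ℝ) := by positivity
  have hh1 : 1 / (n:ℝ) ≤ 1 := by
    rw [div_le_one hn0]; exact hn1
  set t := x - b with htdef
  set h := 1 / (n:ℝ) with hhdef
  -- rewrite inner integral
  have hinner : (∫ y in x..(x + h), ∫ u in b..y, Real.log (y - u))
      = ∫ y in x..(x + h), ((y - b) * Real.log (y - b) - (y - b)) := by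
    apply intervalIntegral.integral_congr
    intro y hy
    rw [Set.uIcc_of_le (by linarith)] at hy
    exact aux_part1 b y (lt_of_lt_of_le hbx hy.1)
  rw [hinner, aux_outer b x h hbx hh0.le]
  have e1 : x + h - b = t + h := by rw [htdef]; ring
  rw [e1]
  -- the log expansion
  set u := h / t with hudef
  have hu0 : 0 ≤ u := by positivity
  have hr := aux_log_taylor u hu0
  set r := Real.log (1 + u) - (u - u ^ 2 / 2 + u ^ 3 / 3) with hrdef
  have hlog : Real.log (t + h) = Real.log t + (h/t - (h/t) ^ 2 / 2 + (h/t) ^ 3 / 3) + r := by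
    have h2 : (1 : ℝ) + u = (t + h) / t := by
      rw [hudef]; field_simp
    have h3 : Real.log (1 + u) = Real.log (t + h) - Real.log t := by
      rw [h2, Real.log_div (by positivity) ht0.ne']
    rw [hrdef, h3, hudef]
    ring
  rw [aux_identity (n:ℝ) t r (Real.log (t + h)) hn0 ht0 (by rw [hlog, hhdef])]
  -- bound
  have habs : |(n:ℝ) ^ 2 * (h ^ 4 / (12 * t ^ 2) + h ^ 5 / (6 * t ^ 3) + (t + h) ^ 2 / 2 * r)|
      = (n:ℝ) ^ 2 * |h ^ 4 / (12 * t ^ 2) + h ^ 5 / (6 * t ^ 3) + (t + h) ^ 2 / 2 * r| := by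
    rw [abs_mul, abs_of_nonneg (by positivity)]
  have htri : |h ^ 4 / (12 * t ^ 2) + h ^ 5 / (6 * t ^ 3) + (t + h) ^ 2 / 2 * r|
      ≤ h ^ 4 / (12 * t ^ 2) + h ^ 5 / (6 * t ^ 3) + (t + h) ^ 2 / 2 * |r| := by
    calc |h ^ 4 / (12 * t ^ 2) + h ^ 5 / (6 * t ^ 3) + (t + h) ^ 2 / 2 * r|
        ≤ |h ^ 4 / (12 * t ^ 2) + h ^ 5 / (6 * t ^ 3)| + |(t + h) ^ 2 / 2 * r| := abs_add_le _ _
      _ ≤ h ^ 4 / (12 * t ^ 2) + h ^ 5 / (6 * t ^ 3) + (t + h) ^ 2 / 2 * |r| := by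
          rw [abs_of_nonneg (by positivity), abs_mul, abs_of_nonneg (by positivity : (0:ℝ) ≤ (t + h) ^ 2 / 2)]
  have hRle : |r| ≤ h ^ 4 / (4 * t ^ 4) := by
    have : u ^ 4 / 4 = h ^ 4 / (4 * t ^ 4) := by
      rw [hudef]; field_simp
    linarith [hr, this.symm.le]
  have hfin := aux_final h t δ |r| hδ ht hh0 hh1 (abs_nonneg r) hRle
  have hn2 : (n:ℝ) ^ 2 = 1 / h ^ 2 := by
    rw [hhdef]; field_simp
  have hC : (1 / (12 * δ ^ 2) + 1 / (6 * δ ^ 3) + (1 + 1/δ) ^ 2 / (8 * δ ^ 2)) / (n:ℝ) ^ 2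
      = (1 / (12 * δ ^ 2) + 1 / (6 * δ ^ 3) + (1 + 1/δ) ^ 2 / (8 * δ ^ 2)) * h ^ 2 := by
    rw [hhdef]; field_simp
  rw [habs, hC, hn2]
  calc (1 / h ^ 2) * |h ^ 4 / (12 * t ^ 2) + h ^ 5 / (6 * t ^ 3) + (t + h) ^ 2 / 2 * r|
      ≤ (1 / h ^ 2) * (h ^ 4 / (12 * t ^ 2) + h ^ 5 / (6 * t ^ 3) + (t + h) ^ 2 / 2 * |r|) := by
        apply mul_le_mul_of_nonneg_left htri (by positivity)
    _ ≤ _ := hfin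
end

section
/- Stirling comparison: for b ∈ ℝ, x = b + k/n with k a positive integer, as n → ∞ with x - b bounded away from 0 and bounded above, ln(k!/n^k) - n²∫_x^{x+1/n}∫_b^y ln(y-u) du dy = (1/2)ln n + ln√(2π) - 1/(12 n (x-b)) + O(1/n²). -/
open intervalIntegral Real Set Filter Topology Finset

lemma intInt_log_zero (s : ℝ) (hs : 0 ≤ s) :
    IntervalIntegrable Real.log MeasureTheory.volume 0 s := by
  have hdom : IntervalIntegrable (fun x : ℝ => 2 * x ^ (-(1:ℝ)/2) + x)
      MeasureTheory.volume 0 s :=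
    ((intervalIntegral.intervalIntegrable_rpow' (by norm_num)).const_mul 2).add
      (continuous_id.intervalIntegrable 0 s)
  refine hdom.mono_fun Real.measurable_log.aestronglyMeasurable ?_
  have hsub : Set.uIoc (0:ℝ) s = Set.Ioc 0 s := Set.uIoc_of_le hs
  rw [Filter.EventuallyLE, MeasureTheory.ae_restrict_iff' (by rw [hsub]; exact measurableSet_Ioc)]
  refine MeasureTheory.ae_of_all _ fun x hx => ?_
  rw [hsub] at hx
  have hx0 : 0 < x := hx.1
  have hrpow : x ^ (-(1:ℝ)/2) = 1 / Real.sqrt x := by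
    rw [show (-(1:ℝ)/2) = -(1/2) by norm_num, Real.rpow_neg hx0.le, Real.sqrt_eq_rpow, one_div]
    norm_num
  have hsq : 0 < Real.sqrt x := Real.sqrt_pos.2 hx0
  have hbound : |Real.log x| ≤ 2 * (1 / Real.sqrt x) + x := by
    rcases le_or_gt x 1 with h1 | h1
    · have hneg : Real.log x ≤ 0 := Real.log_nonpos hx0.le h1
      rw [abs_of_nonpos hneg]
      have : -Real.log x = 2 * Real.log (1 / Real.sqrt x) := by
        rw [Real.log_div one_ne_zero hsq.ne', Real.log_one, Real.log_sqrt hx0.le]; ring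
      rw [this]
      have hlog : Real.log (1 / Real.sqrt x) ≤ 1 / Real.sqrt x - 1 :=
        Real.log_le_sub_one_of_pos (by positivity)
      nlinarith
    · have hpos : 0 ≤ Real.log x := Real.log_nonneg h1.le
      rw [abs_of_nonneg hpos]
      have hlog : Real.log x ≤ x - 1 := Real.log_le_sub_one_of_pos hx0
      have : 0 ≤ 1 / Real.sqrt x := by positivity
      linarith
  have hrhs : 0 ≤ 2 * x ^ (-(1:ℝ)/2) + x := by rw [hrpow]; positivity
  calc ‖Real.log x‖ = |Real.log x| := rfl
    _ ≤ 2 * (1 / Real.sqrt x) + x := hbound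
    _ = |2 * x ^ (-(1:ℝ)/2) + x| := by rw [abs_of_nonneg hrhs, hrpow]
    _ = ‖2 * x ^ (-(1:ℝ)/2) + x‖ := rfl

lemma integral_log_zero (s : ℝ) (hs : 0 ≤ s) :
    ∫ x in (0:ℝ)..s, Real.log x = s * Real.log s - s := by
  have := intervalIntegral.integral_eq_sub_of_hasDeriv_right_of_le hs
    (f := fun x => x * Real.log x - x) (f' := Real.log)
    (((Real.continuous_mul_log).sub continuous_id).continuousOn)
    (fun x hx => by
      have h := (Real.hasDerivAt_mul_log (ne_of_gt hx.1)).sub (hasDerivAt_id x)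
      simpa [Pi.sub_def] using h.hasDerivWithinAt)
    (intInt_log_zero s hs)
  simpa using this

lemma inner_integral_eval (b y : ℝ) (hby : b ≤ y) :
    ∫ u in b..y, Real.log (y - u) = (y - b) * Real.log (y - b) - (y - b) := by
  rw [intervalIntegral.integral_comp_sub_left (fun u => Real.log u) y, sub_self]
  exact integral_log_zero _ (by linarith)

lemma hasDerivAt_G (b : ℝ) (y : ℝ) (hy : b < y) :
    HasDerivAt (fun y => (y - b) ^ 2 / 2 * Real.log (y - b) - 3 / 4 * (y - b) ^ 2)
      ((y - b) * Real.log (y - b) - (y - b)) y := by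
  have hs : (0:ℝ) < y - b := by linarith
  have h1 : HasDerivAt (fun y : ℝ => y - b) 1 y := (hasDerivAt_id y).sub_const b
  have h2 : HasDerivAt (fun s : ℝ => s ^ 2 / 2 * Real.log s - 3 / 4 * s ^ 2)
      ((y - b) * Real.log (y - b) - (y - b)) (y - b) := by
    have hp : HasDerivAt (fun s : ℝ => s ^ 2 / 2) ((y - b)) (y - b) := by
      simpa using (hasDerivAt_pow 2 (y - b)).div_const 2
    have hl : HasDerivAt Real.log (y - b)⁻¹ (y - b) := Real.hasDerivAt_log hs.ne'
    have hq : HasDerivAt (fun s : ℝ => 3 / 4 * s ^ 2) (3 / 4 * (2 * (y - b))) (y - b) := by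
      simpa using (hasDerivAt_pow 2 (y - b)).const_mul (3/4 : ℝ)
    have := (hp.mul hl).sub hq
    refine this.congr_deriv ?_
    field_simp
    ring
  have := h2.comp y h1
  rw [mul_one] at this
  exact this

lemma outer_integral_eval (b x c : ℝ) (hbx : b < x) (hxc : x ≤ c) :
    ∫ y in x..c, ((y - b) * Real.log (y - b) - (y - b)) =
      ((c - b) ^ 2 / 2 * Real.log (c - b) - 3 / 4 * (c - b) ^ 2) -
      ((x - b) ^ 2 / 2 * Real.log (x - b) - 3 / 4 * (x - b) ^ 2) := by
  have huIcc : Set.uIcc x c = Set.Icc x c := Set.uIcc_of_le hxc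
  refine intervalIntegral.integral_eq_sub_of_hasDerivAt
    (f := fun y => (y - b) ^ 2 / 2 * Real.log (y - b) - 3 / 4 * (y - b) ^ 2) (fun y hy => ?_) ?_
  · rw [huIcc] at hy
    exact hasDerivAt_G b y (lt_of_lt_of_le hbx hy.1)
  · apply ContinuousOn.intervalIntegrable
    rw [huIcc]
    have hcont : ContinuousOn (fun y : ℝ => y - b) (Set.Icc x c) :=
      (continuous_id.sub continuous_const).continuousOn
    exact (hcont.mul (hcont.log (fun y hy => by
      have := hy.1; intro h; nlinarith [hy.1]))).sub hcont

lemma outer_integrand_congr (b x c : ℝ) (hbx : b < x) (hxc : x ≤ c) :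
    ∫ y in x..c, (∫ u in b..y, Real.log (y - u)) =
      ∫ y in x..c, ((y - b) * Real.log (y - b) - (y - b)) := by
  apply intervalIntegral.integral_congr
  intro y hy
  rw [Set.uIcc_of_le hxc] at hy
  exact inner_integral_eval b y (by linarith [hy.1])

lemma aux1 (m : ℝ) (hm : 1 ≤ m) :
    1/3 * ((1/(2*m+1))^2 / (1 - (1/(2*m+1))^2)) = 1/(12*m) - 1/(12*(m+1)) := by
  have h0 : (0:ℝ) < m := by linarith
  have h1 : (0:ℝ) < 2*m+1 := by linarith
  have h2 : ((2*m+1)^2 - 1) ≠ 0 := by nlinarith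
  have h3 : 1 - (1/(2*m+1))^2 = ((2*m+1)^2 - 1)/(2*m+1)^2 := by
    field_simp
  rw [h3]
  field_simp
  ring

lemma aux2 (m : ℝ) (hm : 1 ≤ m) :
    1/(12*m) - 1/(48*m^2) - (1/(12*(m+1)) - 1/(48*(m+1)^2)) ≤ 1/(3*(2*m+1)^2) := by
  have h0 : (0:ℝ) < m := by linarith
  have hEq : 1/(3*(2*m+1)^2) -
      (1/(12*m) - 1/(48*m^2) - (1/(12*(m+1)) - 1/(48*(m+1)^2))) =
      ((2*m+1)^3 - (2*m+1)^2 + 1) / (48*m^2*(m+1)^2*(2*m+1)^2) := by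
    field_simp
    ring
  nlinarith [hEq, div_nonneg (by nlinarith : (0:ℝ) ≤ (2*m+1)^3 - (2*m+1)^2 + 1)
    (by positivity : (0:ℝ) ≤ 48*m^2*(m+1)^2*(2*m+1)^2)]

noncomputable def dS (n : ℕ) : ℝ := Real.log (Stirling.stirlingSeq (n + 1))

lemma dS_tendsto : Tendsto dS atTop (𝓝 (Real.log (Real.sqrt Real.pi))) := by
  have h1 : Tendsto (fun n : ℕ => Stirling.stirlingSeq (n + 1)) atTop
      (𝓝 (Real.sqrt Real.pi)) :=
    Stirling.tendsto_stirlingSeq_sqrt_pi.comp (Filter.tendsto_add_atTop_nat 1)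
  exact ((Real.continuousAt_log
    (Real.sqrt_pos.2 Real.pi_pos).ne').tendsto).comp h1

lemma dS_diff_le (n : ℕ) :
    dS n - dS (n + 1) ≤ 1 / (12 * ((n : ℝ) + 1)) - 1 / (12 * (((n : ℝ) + 1) + 1)) := by
  have hm0 : (0:ℝ) < (n:ℝ) + 1 := by positivity
  have hr0 : (0:ℝ) ≤ ((1 : ℝ) / (2 * ((n:ℝ) + 1) + 1)) ^ 2 := sq_nonneg _
  have hr1 : ((1 : ℝ) / (2 * ((n:ℝ) + 1) + 1)) ^ 2 < 1 := by
    rw [div_pow, one_pow, div_lt_one (by positivity)]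
    nlinarith
  have hgeo : HasSum (fun k : ℕ => (1:ℝ)/3 * (((1 : ℝ) / (2 * ((n:ℝ) + 1) + 1)) ^ 2) ^ (k + 1))
      (1/3 * ((((1 : ℝ) / (2 * ((n:ℝ) + 1) + 1)) ^ 2) /
        (1 - (((1 : ℝ) / (2 * ((n:ℝ) + 1) + 1)) ^ 2)))) := by
    have := (hasSum_geometric_of_lt_one hr0 hr1).mul_left
      (((1 : ℝ) / (2 * ((n:ℝ) + 1) + 1)) ^ 2)
    simp_rw [← _root_.pow_succ'] at this
    exact this.mul_left (1/3)
  have hsum := Stirling.log_stirlingSeq_diff_hasSum n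
  have hcast : ((2 : ℝ) * ((n : ℕ) + 1 : ℕ) + 1 : ℝ) = 2 * ((n:ℝ) + 1) + 1 := by push_cast; ring
  have hle : dS n - dS (n + 1) ≤ 1/3 * ((((1 : ℝ) / (2 * ((n:ℝ) + 1) + 1)) ^ 2) /
      (1 - (((1 : ℝ) / (2 * ((n:ℝ) + 1) + 1)) ^ 2))) := by
    rw [hcast] at hsum
    refine hasSum_le (fun k => ?_) hsum hgeo
    · have h1 : (1:ℝ) / (2 * ((k:ℕ) + 1 : ℕ) + 1) ≤ 1/3 := by
        rw [div_le_div_iff₀ (by positivity) (by norm_num)]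
        push_cast; linarith [Nat.cast_nonneg (α := ℝ) k]
      exact mul_le_mul_of_nonneg_right h1 (pow_nonneg hr0 _)
  exact hle.trans (le_of_eq (aux1 _ (by linarith [Nat.cast_nonneg (α := ℝ) n])))

lemma dS_diff_ge (n : ℕ) :
    1 / (3 * (2 * ((n:ℝ) + 1) + 1) ^ 2) ≤ dS n - dS (n + 1) := by
  have hsum := Stirling.log_stirlingSeq_diff_hasSum n
  have h := le_hasSum hsum 0 (fun j _ => by positivity)
  calc 1 / (3 * (2 * ((n:ℝ) + 1) + 1) ^ 2)
      = (1 : ℝ) / (2 * ((0:ℕ) + 1 : ℕ) + 1) *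
        ((1 / (2 * ((n : ℕ) + 1 : ℕ) + 1)) ^ 2) ^ ((0:ℕ) + 1) := by
        push_cast
        rw [pow_one, div_pow, one_pow]
        rw [div_mul_div_comm]
        norm_num
    _ ≤ dS n - dS (n + 1) := h

lemma tendsto_aux1 : Tendsto (fun n : ℕ => 1 / (12 * ((n:ℝ) + 1))) atTop (𝓝 0) := by
  have hn : Tendsto (fun n : ℕ => ((n:ℝ) + 1)) atTop atTop :=
    tendsto_atTop_add_const_right atTop 1 tendsto_natCast_atTop_atTop
  have := (hn.const_mul_atTop (show (0:ℝ) < 12 by norm_num)).inv_tendsto_atTop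
  refine this.congr (fun n => ?_)
  simp [Pi.inv_apply, one_div]

lemma tendsto_aux2 : Tendsto (fun n : ℕ => 1 / (48 * ((n:ℝ) + 1) ^ 2)) atTop (𝓝 0) := by
  have hn : Tendsto (fun n : ℕ => ((n:ℝ) + 1)) atTop atTop :=
    tendsto_atTop_add_const_right atTop 1 tendsto_natCast_atTop_atTop
  have hn2 : Tendsto (fun n : ℕ => ((n:ℝ) + 1) ^ 2) atTop atTop := by
    refine tendsto_atTop_mono (fun n => ?_) hn
    nlinarith [Nat.cast_nonneg (α := ℝ) n]
  have := (hn2.const_mul_atTop (show (0:ℝ) < 48 by norm_num)).inv_tendsto_atTop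
  refine this.congr (fun n => ?_)
  simp [Pi.inv_apply, one_div]

lemma dS_sandwich (n : ℕ) :
    1 / (12 * ((n:ℝ) + 1)) - 1 / (48 * ((n:ℝ) + 1) ^ 2) ≤
      dS n - Real.log (Real.sqrt Real.pi) ∧
    dS n - Real.log (Real.sqrt Real.pi) ≤ 1 / (12 * ((n:ℝ) + 1)) := by
  have hcmono : Monotone (fun n : ℕ => dS n - 1 / (12 * ((n:ℝ) + 1))) := by
    refine monotone_nat_of_le_succ (fun n => ?_)
    have := dS_diff_le n
    push_cast
    linarith
  have hctend : Tendsto (fun n : ℕ => dS n - 1 / (12 * ((n:ℝ) + 1))) atTop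
      (𝓝 (Real.log (Real.sqrt Real.pi))) := by
    simpa using dS_tendsto.sub tendsto_aux1
  have hc := hcmono.ge_of_tendsto hctend n
  have heanti : Antitone (fun n : ℕ =>
      dS n - 1 / (12 * ((n:ℝ) + 1)) + 1 / (48 * ((n:ℝ) + 1) ^ 2)) := by
    refine antitone_nat_of_succ_le (fun n => ?_)
    have h1 := dS_diff_ge n
    have h2 := aux2 ((n:ℝ) + 1) (by linarith [Nat.cast_nonneg (α := ℝ) n])
    push_cast
    linarith
  have hetend : Tendsto (fun n : ℕ =>
      dS n - 1 / (12 * ((n:ℝ) + 1)) + 1 / (48 * ((n:ℝ) + 1) ^ 2)) atTop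
      (𝓝 (Real.log (Real.sqrt Real.pi))) := by
    simpa using (dS_tendsto.sub tendsto_aux1).add tendsto_aux2
  have he := heanti.le_of_tendsto hetend n
  constructor <;> [linarith; linarith]

lemma stirling_robbins (k : ℕ) (hk : 1 ≤ k) :
    |Real.log (k.factorial : ℝ) -
        (((k:ℝ) + 1/2) * Real.log k - k + Real.log (Real.sqrt (2 * Real.pi))) -
      1 / (12 * (k:ℝ))| ≤ 1 / (48 * (k:ℝ) ^ 2) := by
  obtain ⟨n, rfl⟩ : ∃ n, k = n + 1 := ⟨k - 1, (Nat.succ_pred_eq_of_pos hk).symm⟩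
  have hk0 : (0:ℝ) < ((n:ℝ) + 1) := by positivity
  have hform := Stirling.log_stirlingSeq_formula (n + 1)
  have hlog2k : Real.log (2 * ((n + 1 : ℕ) : ℝ)) = Real.log 2 + Real.log ((n+1 : ℕ) : ℝ) :=
    Real.log_mul two_ne_zero (by positivity)
  have hlogke : Real.log (((n+1 : ℕ) : ℝ) / Real.exp 1) =
      Real.log ((n+1 : ℕ) : ℝ) - 1 := by
    rw [Real.log_div (by positivity) (Real.exp_ne_zero 1), Real.log_exp]
  have hsqrt2pi : Real.log (Real.sqrt (2 * Real.pi)) =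
      1/2 * Real.log 2 + Real.log (Real.sqrt Real.pi) := by
    rw [Real.log_sqrt (by positivity), Real.log_sqrt Real.pi_pos.le,
      Real.log_mul two_ne_zero Real.pi_pos.ne']
    ring
  have hds : dS n = Real.log (((n+1).factorial : ℕ) : ℝ) -
      1/2 * (Real.log 2 + Real.log (((n+1:ℕ)) : ℝ)) -
      (((n+1:ℕ)) : ℝ) * (Real.log (((n+1:ℕ)) : ℝ) - 1) := by
    unfold dS
    rw [hform, hlog2k, hlogke]
  have hr : Real.log (((n+1).factorial : ℕ) : ℝ) -
      ((((n+1:ℕ):ℝ) + 1/2) * Real.log (((n+1:ℕ)):ℝ) - (((n+1:ℕ)):ℝ) +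
        Real.log (Real.sqrt (2 * Real.pi))) =
      dS n - Real.log (Real.sqrt Real.pi) := by
    rw [hds, hsqrt2pi]; ring
  obtain ⟨h1, h2⟩ := dS_sandwich n
  have hcast : (((n+1:ℕ)):ℝ) = (n:ℝ) + 1 := by push_cast; ring
  rw [hcast] at hr
  rw [abs_le]
  push_cast
  constructor <;> linarith [hr, h1, h2]

set_option maxHeartbeats 1600000 in
lemma log_expand (k : ℕ) (hk : 1 ≤ k) :
    |(((k:ℝ)+1)^2/2) * Real.log (1 + 1/(k:ℝ)) - ((k:ℝ)/2 + 3/4 + 1/(6*(k:ℝ)))| ≤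
      5/(k:ℝ)^2 := by
  set K : ℝ := (k:ℝ) with hKdef
  clear_value K
  have hK : (1:ℝ) ≤ K := by rw [hKdef]; exact_mod_cast hk
  have hK0 : (0:ℝ) < K := by linarith
  rcases le_or_gt 2 K with hK2 | hK2
  · -- main case K ≥ 2
    have ht0 : (0:ℝ) < 1/K := by positivity
    have ht : 1/K ≤ 1/2 := by
      rw [div_le_div_iff₀ hK0 (by norm_num)]; linarith
    have habs : |(-(1/K) : ℝ)| < 1 := by
      rw [abs_neg, abs_of_pos ht0]; linarith
    have h := Real.abs_log_sub_add_sum_range_le habs 4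
    rw [abs_neg, abs_of_pos ht0] at h
    have hsum : (∑ i ∈ Finset.range 4, (-(1/K))^(i+1)/((i:ℕ)+1)) =
        -((1/K) - (1/K)^2/2 + (1/K)^3/3 - (1/K)^4/4) := by
      norm_num [Finset.sum_range_succ]
      ring
    rw [hsum] at h
    have hone : (1 : ℝ) - -(1/K) = 1 + 1/K := by ring
    rw [hone] at h
    have hrem : (1/K)^5 / (1 - 1/K) ≤ 2 * (1/K)^5 := by
      rw [div_le_iff₀ (by linarith)]
      nlinarith [pow_pos ht0 5]
    have hlogP : |Real.log (1 + 1/K) -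
        ((1/K) - (1/K)^2/2 + (1/K)^3/3 - (1/K)^4/4)| ≤ 2 * (1/K)^5 := by
      have heq : Real.log (1 + 1/K) - ((1/K) - (1/K)^2/2 + (1/K)^3/3 - (1/K)^4/4) =
          -((1/K) - (1/K)^2/2 + (1/K)^3/3 - (1/K)^4/4) + Real.log (1 + 1/K) := by ring
      rw [heq]
      exact h.trans hrem
    have hP : ((K+1)^2/2) * ((1/K) - (1/K)^2/2 + (1/K)^3/3 - (1/K)^4/4) -
        (K/2 + 3/4 + 1/(6*K)) = -(1/(24*K^2)) - 1/(12*K^3) - 1/(8*K^4) := by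
      field_simp
      ring
    have hsplit : ((K+1)^2/2) * Real.log (1 + 1/K) - (K/2 + 3/4 + 1/(6*K)) =
        ((K+1)^2/2) * (Real.log (1 + 1/K) -
          ((1/K) - (1/K)^2/2 + (1/K)^3/3 - (1/K)^4/4)) +
        (((K+1)^2/2) * ((1/K) - (1/K)^2/2 + (1/K)^3/3 - (1/K)^4/4) -
          (K/2 + 3/4 + 1/(6*K))) := by ring
    rw [hsplit]
    refine (abs_add_le _ _).trans ?_
    rw [hP, abs_mul, abs_of_pos (by positivity : (0:ℝ) < (K+1)^2/2)]
    have h1 : ((K+1)^2/2) * |Real.log (1 + 1/K) -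
        ((1/K) - (1/K)^2/2 + (1/K)^3/3 - (1/K)^4/4)| ≤ ((K+1)^2/2) * (2 * (1/K)^5) :=
      mul_le_mul_of_nonneg_left hlogP (by positivity)
    have hK45 : K^4 ≤ K^5 := by
      nlinarith [mul_le_mul_of_nonneg_left hK (pow_nonneg hK0.le 4)]
    have hA : (K+1)^2 ≤ 4*K^2 := by nlinarith
    have h2 : ((K+1)^2/2) * (2 * (1/K)^5) ≤ 4 / K^2 := by
      have hEq : ((K+1)^2/2) * (2 * (1/K)^5) = (K+1)^2 / K^5 := by
        field_simp
      rw [hEq, div_le_div_iff₀ (by positivity) (by positivity)]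
      have hm1 := mul_le_mul_of_nonneg_right hA (sq_nonneg K)
      linarith [hm1, hK45]
    have hK23 : K^2 ≤ K^3 := by
      have := mul_le_mul_of_nonneg_left hK (sq_nonneg K)
      nlinarith [this]
    have hK24 : K^2 ≤ K^4 := by
      have := mul_le_mul_of_nonneg_left hK (pow_nonneg hK0.le 3)
      nlinarith [this, hK23]
    have b2 : 1/(12*K^3) ≤ 1/(12*K^2) := by
      apply one_div_le_one_div_of_le (by positivity)
      linarith
    have b3 : 1/(8*K^4) ≤ 1/(8*K^2) := by
      apply one_div_le_one_div_of_le (by positivity)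
      linarith
    have habs2 : |-(1/(24*K^2)) - 1/(12*K^3) - 1/(8*K^4)| =
        1/(24*K^2) + 1/(12*K^3) + 1/(8*K^4) := by
      rw [abs_of_nonpos (by
        have p1 : 0 < 1/(24*K^2) := by positivity
        have p2 : 0 < 1/(12*K^3) := by positivity
        have p3 : 0 < 1/(8*K^4) := by positivity
        linarith)]
      ring
    have hsum3 : 1/(24*K^2) + 1/(12*K^2) + 1/(8*K^2) = (1/4)*(1/K^2) := by
      field_simp
      ring
    have hq : (0:ℝ) ≤ 1/K^2 := by positivity
    have h3 : |-(1/(24*K^2)) - 1/(12*K^3) - 1/(8*K^4)| ≤ 1/K^2 := by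
      rw [habs2]
      linarith
    have hfin : (4:ℝ)/K^2 + 1/K^2 = 5/K^2 := by ring
    linarith
  · -- case k = 1
    have hk1 : k = 1 := by
      rw [hKdef] at hK2
      have : k < 2 := by exact_mod_cast hK2
      omega
    subst hk1
    rw [hKdef] at *
    have hl0 : (0:ℝ) ≤ Real.log 2 := Real.log_nonneg one_le_two
    have hl1 : Real.log 2 ≤ 1 := by
      have := Real.log_le_sub_one_of_pos (show (0:ℝ) < 2 by norm_num)
      linarith
    have hval : (1:ℝ) + 1/((1:ℕ):ℝ) = 2 := by norm_num
    rw [hval, abs_le]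
    push_cast
    constructor <;> nlinarith

set_option maxHeartbeats 1600000 in
/-- Stirling comparison: for `x = b + k/n` with `δ ≤ x - b ≤ Δ`,
`ln(k!/nᵏ) - n²∫_x^{x+1/n}∫_b^y ln(y-u) du dy
  = (1/2)ln n + ln√(2π) - 1/(12n(x-b)) + O(1/n²)`, uniformly in `b, k`. -/
theorem stirling_comparison (δ Δ : ℝ) (hδ : 0 < δ) (hΔ : δ ≤ Δ) :
    ∃ C : ℝ, ∀ n : ℕ, 1 ≤ n → ∀ b : ℝ, ∀ k : ℕ, 0 < k →
      δ ≤ (k : ℝ) / n → (k : ℝ) / n ≤ Δ →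
      |Real.log ((k.factorial : ℝ) / (n : ℝ) ^ k) -
          (n : ℝ) ^ 2 *
            (∫ y in (b + (k : ℝ) / n)..(b + (k : ℝ) / n + 1 / (n : ℝ)),
              ∫ u in b..y, Real.log (y - u)) -
          ((1 / 2) * Real.log n + Real.log (Real.sqrt (2 * Real.pi)) -
            1 / (12 * n * ((k : ℝ) / n)))| ≤ C / (n : ℝ) ^ 2 := by
  refine ⟨6 / δ ^ 2, fun n hn b k hkpos hlow hupp => ?_⟩
  have hn0 : (0:ℝ) < (n:ℝ) := by exact_mod_cast hn
  have hk0 : (0:ℝ) < (k:ℝ) := by exact_mod_cast hkpos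
  have hk1 : (0:ℝ) < (k:ℝ) + 1 := by linarith
  have hdiv : (0:ℝ) < (k:ℝ)/(n:ℝ) := by positivity
  have hbx : b < b + (k:ℝ)/(n:ℝ) := by linarith
  have hxc : b + (k:ℝ)/(n:ℝ) ≤ b + (k:ℝ)/(n:ℝ) + 1/(n:ℝ) := by
    have : (0:ℝ) < 1/(n:ℝ) := by positivity
    linarith
  have hIval : (∫ y in (b + (k : ℝ) / n)..(b + (k : ℝ) / n + 1 / (n : ℝ)),
        ∫ u in b..y, Real.log (y - u)) =
      ((((k:ℝ)+1)/(n:ℝ)) ^ 2 / 2 * Real.log (((k:ℝ)+1)/(n:ℝ)) -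
        3 / 4 * ((((k:ℝ)+1)/(n:ℝ))) ^ 2) -
      (((k:ℝ)/(n:ℝ)) ^ 2 / 2 * Real.log ((k:ℝ)/(n:ℝ)) -
        3 / 4 * (((k:ℝ)/(n:ℝ))) ^ 2) := by
    rw [outer_integrand_congr b _ _ hbx hxc, outer_integral_eval b _ _ hbx hxc,
      show b + (k:ℝ)/(n:ℝ) + 1/(n:ℝ) - b = ((k:ℝ)+1)/(n:ℝ) by ring,
      show b + (k:ℝ)/(n:ℝ) - b = (k:ℝ)/(n:ℝ) by ring]
  rw [hIval]
  have hEq : Real.log ((k.factorial : ℝ) / (n : ℝ) ^ k) -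
      (n : ℝ) ^ 2 *
        (((((k:ℝ)+1)/(n:ℝ)) ^ 2 / 2 * Real.log (((k:ℝ)+1)/(n:ℝ)) -
          3 / 4 * ((((k:ℝ)+1)/(n:ℝ))) ^ 2) -
        (((k:ℝ)/(n:ℝ)) ^ 2 / 2 * Real.log ((k:ℝ)/(n:ℝ)) -
          3 / 4 * (((k:ℝ)/(n:ℝ))) ^ 2)) -
      ((1 / 2) * Real.log n + Real.log (Real.sqrt (2 * Real.pi)) -
        1 / (12 * n * ((k : ℝ) / n))) =
      (Real.log (k.factorial : ℝ) -
        (((k:ℝ) + 1/2) * Real.log k - k + Real.log (Real.sqrt (2 * Real.pi))) -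
          1 / (12 * (k:ℝ))) -
      ((((k:ℝ)+1)^2/2) * Real.log (1 + 1/(k:ℝ)) -
        ((k:ℝ)/2 + 3/4 + 1/(6*(k:ℝ)))) := by
    have hfac : ((k.factorial : ℕ) : ℝ) ≠ 0 := by
      exact_mod_cast k.factorial_ne_zero
    rw [Real.log_div hfac (by positivity), Real.log_pow,
      Real.log_div hk1.ne' hn0.ne', Real.log_div hk0.ne' hn0.ne',
      show (1:ℝ) + 1/(k:ℝ) = ((k:ℝ)+1)/(k:ℝ) by field_simp,
      Real.log_div hk1.ne' hk0.ne']
    field_simp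
    ring
  rw [hEq]
  have hA := stirling_robbins k hkpos
  have hB := log_expand k hkpos
  have htri := abs_sub (Real.log (k.factorial : ℝ) -
      (((k:ℝ) + 1/2) * Real.log k - k + Real.log (Real.sqrt (2 * Real.pi))) -
        1 / (12 * (k:ℝ)))
      ((((k:ℝ)+1)^2/2) * Real.log (1 + 1/(k:ℝ)) - ((k:ℝ)/2 + 3/4 + 1/(6*(k:ℝ))))
  have hb1 : 1 / (48 * (k:ℝ) ^ 2) ≤ 1 / (k:ℝ)^2 := by
    apply one_div_le_one_div_of_le (by positivity)
    nlinarith [sq_nonneg (k:ℝ)]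
  have hkn : δ * (n:ℝ) ≤ (k:ℝ) := by
    rw [div_le_iff₀ hn0] at *
    · exact (le_div_iff₀ hn0).mp hlow
  have hsq : δ^2 * (n:ℝ)^2 ≤ (k:ℝ)^2 := by
    have := mul_le_mul hkn hkn (by positivity) hk0.le
    nlinarith [this]
  have hfin : 6 / (k:ℝ)^2 ≤ (6/δ^2) / (n:ℝ)^2 := by
    rw [div_div]
    exact div_le_div_of_nonneg_left (by norm_num) (by positivity) hsq
  have h1 := htri.trans (add_le_add hA hB)
  have h2 : 1/(48*(k:ℝ)^2) + 5/(k:ℝ)^2 ≤ 6/(k:ℝ)^2 := by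
    have h3 : (1:ℝ)/(k:ℝ)^2 + 5/(k:ℝ)^2 = 6/(k:ℝ)^2 := by ring
    linarith [hb1]
  exact h1.trans (h2.trans hfin)
end
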